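/- With A(F) and the integral h as above (h(ã^p b̃^r c̃^s) = δ_{p0}δ_{r2}δ_{s2}), we have h(1) = 0; consequently no nonzero two-sided integral on A(F) is normalizable, i.e. A(F) admits no Haar measure. -/
import Mathlib


open TensorProduct

noncomputable section

/-- `q = e^{2πi/3}`, a primitive cube root of unity. -/
def qc : ℂ := Complex.exp (2 * Real.pi * Complex.I / 3)

/-- generators `a, b, c, d` of the free algebra. -/
def ga : FreeAlgebra ℂ (Fin 4) := FreeAlgebra.ι ℂ 0
def gb : FreeAlgebra ℂ (Fin 4) := FreeAlgebra.ι ℂ 1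
def gc : FreeAlgebra ℂ (Fin 4) := FreeAlgebra.ι ℂ 2
def gd : FreeAlgebra ℂ (Fin 4) := FreeAlgebra.ι ℂ 3

/-- The defining relations of `A(SL_q(2))`. -/
inductive SLqRel : FreeAlgebra ℂ (Fin 4) → FreeAlgebra ℂ (Fin 4) → Prop
  | ab : SLqRel (ga * gb) (qc • (gb * ga))
  | ac : SLqRel (ga * gc) (qc • (gc * ga))
  | bd : SLqRel (gb * gd) (qc • (gd * gb))
  | bc : SLqRel (gb * gc) (gc * gb)
  | cd : SLqRel (gc * gd) (qc • (gd * gc))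
  | comm : SLqRel (ga * gd - gd * ga) ((qc - qc⁻¹) • (gb * gc))
  | det : SLqRel (ga * gd - qc • (gb * gc)) 1
  | det' : SLqRel (gd * ga - qc⁻¹ • (gb * gc)) 1

/-- the coordinate algebra `A(SL_q(2))` at `q = e^{2πi/3}`. -/
abbrev ASLq : Type := RingQuot SLqRel

def a' : ASLq := RingQuot.mkAlgHom ℂ SLqRel ga
def b' : ASLq := RingQuot.mkAlgHom ℂ SLqRel gb
def c' : ASLq := RingQuot.mkAlgHom ℂ SLqRel gc
def d' : ASLq := RingQuot.mkAlgHom ℂ SLqRel gd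

/-- The relations defining the quotient `A(F)` of `A(SL_q(2))`:
`a³ = 1`, `b³ = 0`, `c³ = 0`, `d³ = 1`. -/
inductive FRel : ASLq → ASLq → Prop
  | a : FRel (a' ^ 3) 1
  | b : FRel (b' ^ 3) 0
  | c : FRel (c' ^ 3) 0
  | d : FRel (d' ^ 3) 1

/-- the 27-dimensional Hopf algebra `A(F)`. -/
abbrev AF : Type := RingQuot FRel

def ta : AF := RingQuot.mkAlgHom ℂ FRel a'
def tb : AF := RingQuot.mkAlgHom ℂ FRel b'
def tc : AF := RingQuot.mkAlgHom ℂ FRel c'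
def td : AF := RingQuot.mkAlgHom ℂ FRel d'


-- scalar lemmas
lemma qc_pow_three : qc ^ 3 = 1 := by
  rw [qc, ← Complex.exp_nat_mul]
  norm_num
  rw [show (3:ℂ) * (2 * Real.pi * Complex.I / 3) = 2 * Real.pi * Complex.I by ring,
    Complex.exp_two_pi_mul_I]

lemma qc_ne_zero : qc ≠ 0 := Complex.exp_ne_zero _

lemma qc_inv_eq : qc⁻¹ = qc ^ 2 := by
  refine inv_eq_of_mul_eq_one_right ?_
  rw [← pow_succ', qc_pow_three]

-- AF relations
lemma rel_ab : ta * tb = qc • (tb * ta) := by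
  have h1 := RingQuot.mkAlgHom_rel ℂ SLqRel.ab
  have h2 := congrArg (RingQuot.mkAlgHom ℂ FRel) h1
  simpa [ta, tb, a', b', map_mul, map_smul] using h2

lemma rel_ac : ta * tc = qc • (tc * ta) := by
  have h1 := RingQuot.mkAlgHom_rel ℂ SLqRel.ac
  have h2 := congrArg (RingQuot.mkAlgHom ℂ FRel) h1
  simpa [ta, tc, a', c', map_mul, map_smul] using h2

lemma rel_cb : tc * tb = tb * tc := by
  have h1 := RingQuot.mkAlgHom_rel ℂ SLqRel.bc
  have h2 := congrArg (RingQuot.mkAlgHom ℂ FRel) h1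
  simpa [tb, tc, b', c', map_mul] using h2.symm

lemma rel_da : td * ta = 1 + qc ^ 2 • (tb * tc) := by
  have h1 := RingQuot.mkAlgHom_rel ℂ SLqRel.det'
  have h2 := congrArg (RingQuot.mkAlgHom ℂ FRel) h1
  simp only [map_sub, map_smul, map_mul, map_one] at h2
  have h3 : td * ta - qc⁻¹ • (tb * tc) = 1 := by
    simpa [ta, tb, tc, td, a', b', c', d'] using h2
  have h4 : td * ta = 1 + qc⁻¹ • (tb * tc) := by
    rw [← h3]; abel
  rw [h4, qc_inv_eq]

lemma rel_a3 : ta * (ta * ta) = 1 := by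
  have h1 := RingQuot.mkAlgHom_rel ℂ FRel.a
  simpa [ta, map_pow, map_one, pow_succ, mul_assoc] using h1

lemma rel_b3 : tb * (tb * tb) = 0 := by
  have h1 := RingQuot.mkAlgHom_rel ℂ FRel.b
  simpa [tb, map_pow, map_zero, pow_succ, mul_assoc] using h1

lemma rel_c3 : tc * (tc * tc) = 0 := by
  have h1 := RingQuot.mkAlgHom_rel ℂ FRel.c
  simpa [tc, map_pow, map_zero, pow_succ, mul_assoc] using h1

lemma rel_ba : tb * ta = qc ^ 2 • (ta * tb) := by
  rw [rel_ab, smul_smul, show qc ^ 2 * qc = 1 by rw [← pow_succ]; exact qc_pow_three, one_smul]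

lemma rel_ca : tc * ta = qc ^ 2 • (ta * tc) := by
  rw [rel_ac, smul_smul, show qc ^ 2 * qc = 1 by rw [← pow_succ]; exact qc_pow_three, one_smul]

lemma rel_ba' (x : AF) : tb * (ta * x) = qc ^ 2 • (ta * (tb * x)) := by
  rw [← mul_assoc, rel_ba, smul_mul_assoc, mul_assoc]

lemma rel_ca' (x : AF) : tc * (ta * x) = qc ^ 2 • (ta * (tc * x)) := by
  rw [← mul_assoc, rel_ca, smul_mul_assoc, mul_assoc]

lemma rel_cb' (x : AF) : tc * (tb * x) = tb * (tc * x) := by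
  rw [← mul_assoc, rel_cb, mul_assoc]

lemma rel_a3' (x : AF) : ta * (ta * (ta * x)) = x := by
  rw [← mul_assoc, ← mul_assoc, mul_assoc ta ta ta, rel_a3, one_mul]

lemma rel_b3' (x : AF) : tb * (tb * (tb * x)) = 0 := by
  rw [← mul_assoc, ← mul_assoc, mul_assoc tb tb tb, rel_b3, zero_mul]

lemma rel_c3' (x : AF) : tc * (tc * (tc * x)) = 0 := by
  rw [← mul_assoc, ← mul_assoc, mul_assoc tc tc tc, rel_c3, zero_mul]

lemma rel_da' (x : AF) : td * (ta * x) = x + qc ^ 2 • (tb * (tc * x)) := by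
  rw [← mul_assoc, rel_da, add_mul, one_mul, smul_mul_assoc, mul_assoc]


/-- With the integral `h` on `A(F)` given on the basis by
`h(ã^p b̃^r c̃^s) = δ_{p0} δ_{r2} δ_{s2}`, one has `h(1) = 0`; consequently there is no
normalized two-sided integral on `A(F)`, i.e. `A(F)` admits no Haar measure. -/
theorem AF_no_haar_measure
    (Δ : AF →ₐ[ℂ] AF ⊗[ℂ] AF)
    (hΔa : Δ ta = ta ⊗ₜ[ℂ] ta + tb ⊗ₜ[ℂ] tc)
    (hΔb : Δ tb = ta ⊗ₜ[ℂ] tb + tb ⊗ₜ[ℂ] td)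
    (hΔc : Δ tc = tc ⊗ₜ[ℂ] ta + td ⊗ₜ[ℂ] tc)
    (hΔd : Δ td = tc ⊗ₜ[ℂ] tb + td ⊗ₜ[ℂ] td)
    (h : AF →ₗ[ℂ] ℂ)
    (hh : ∀ p r s : Fin 3, h (ta ^ (p : ℕ) * tb ^ (r : ℕ) * tc ^ (s : ℕ)) =
      if p = 0 ∧ r = 2 ∧ s = 2 then 1 else 0) :
    h 1 = 0 ∧
    ¬ ∃ h' : AF →ₗ[ℂ] ℂ,
      (∀ x : AF,
        (TensorProduct.rid ℂ AF) ((TensorProduct.map LinearMap.id h') (Δ x)) = h' x • 1) ∧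
      (∀ x : AF,
        (TensorProduct.lid ℂ AF) ((TensorProduct.map h' LinearMap.id) (Δ x)) = h' x • 1) ∧
      h' 1 = 1 := by
  have h1 : h 1 = 0 := by simpa using hh 0 0 0
  refine ⟨h1, ?_⟩
  rintro ⟨h', hR, hL, hnorm⟩
  have hv022 : h (tb * (tb * (tc * tc))) = 1 := by
    simpa [pow_succ, mul_assoc] using hh 0 2 2
  have hv212 : h (ta * (ta * (tb * (tc * tc)))) = 0 := by
    simpa [pow_succ, mul_assoc] using hh 2 1 2
  have hv112 : h (ta * (tb * (tc * tc))) = 0 := by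
    simpa [pow_succ, mul_assoc] using hh 1 1 2
  have hDx : Δ (ta * (ta * tb)) = (ta ⊗ₜ[ℂ] ta + tb ⊗ₜ[ℂ] tc) *
      ((ta ⊗ₜ[ℂ] ta + tb ⊗ₜ[ℂ] tc) * (ta ⊗ₜ[ℂ] tb + tb ⊗ₜ[ℂ] td)) := by
    rw [map_mul, map_mul, hΔa, hΔb]
  have key := hL (ta * (ta * tb))
  rw [hDx] at key
  have key2 := congrArg (fun z : AF => h (z * (ta * (tb * (tc * tc))))) key
  simp only [mul_add, add_mul, Algebra.TensorProduct.tmul_mul_tmul, map_add,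
    TensorProduct.map_tmul, LinearMap.id_coe, id_eq, TensorProduct.lid_tmul,
    smul_mul_assoc, map_smul, smul_eq_mul, one_mul] at key2
  simp only [mul_assoc, rel_ba', rel_ca', rel_cb', rel_da', rel_a3, rel_a3', rel_b3, rel_b3',
    rel_c3, rel_c3', rel_ba, rel_ca, rel_cb, rel_da, mul_add, add_mul, smul_add, smul_smul,
    mul_smul_comm, smul_mul_assoc, mul_zero, zero_mul, smul_zero, add_zero, zero_add,
    map_smul, map_add, map_zero, smul_eq_mul, hnorm, hv022, hv212, hv112, mul_one,
    mul_zero] at key2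
  rw [one_mul] at key2
  exact pow_ne_zero 2 qc_ne_zero key2

end
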